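/- Let n ≥ 1 be an integer and g : G_n → ℂ, where G_n = {j/n : j ∈ ℤ, -n ≤ j ≤ n-1}. Let ĝ_n(m) = (1/n)·Σ_{j=-n}^{n-1} g(j/n)·e^{-πi(j/n)m}, let g' be the discrete derivative of g and g'' = (g')' the second discrete derivative, and set φ_n(m) = n·(e^{-πim/n} - 1), ψ_n(m) = n·(e^{πim/n} - 1), C_n(m) = g((n-1)/n)·e^{-πi((n-1)/n)m} - g(-1)·e^{πim}, D_n(m) = -(1/n)·g(-1)·e^{πim/n}·e^{πim}, C'_n(m) = -g'(-1)·e^{πim}, D'_n(m) = -(1/n)·g'(-1)·e^{πim/n}·e^{πim}, and F_n(m) = ψ_n(m)·φ_n(m)·D_n(m) - ψ_n(m)·C_n(m) + φ_n(m)·D'_n(m) - C'_n(m). Then for every integer m with -n ≤ m ≤ n-1 and m ≠ 0, ĝ_n(m) = ((g'')̂_n(m) + F_n(m)) / ψ_n(m)². -/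

import Mathlib

/-- The discrete derivative on the grid G_n = {j/n : -n ≤ j ≤ n-1}, indexed by j:
for a function f on the grid points (given as f : ℤ → ℂ, with f j the value at j/n),
(dD n f) j = n·(f (j+1) - f j) for j < n-1, and (dD n f) (n-1) = 0. -/
noncomputable def dD (n : ℕ) (f : ℤ → ℂ) (j : ℤ) : ℂ :=
  if j = (n : ℤ) - 1 then 0 else (n : ℂ) * (f (j + 1) - f j)

/-- The m-th discrete Fourier coefficient of f : ℤ → ℂ (f j the value at the grid
point j/n): f̂_n(m) = (1/n)·Σ_{j=-n}^{n-1} f(j)·e^{-πi(j/n)m}. -/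
noncomputable def dFourier (n : ℕ) (f : ℤ → ℂ) (m : ℤ) : ℂ :=
  (1 / (n : ℂ)) * ∑ j ∈ Finset.Icc (-(n : ℤ)) ((n : ℤ) - 1),
    f j * Complex.exp (-((Real.pi : ℂ) * Complex.I * ((j : ℂ) / (n : ℂ)) * (m : ℂ)))

lemma dD_key (n : ℕ) (hn : 1 ≤ n) (f : ℤ → ℂ) (m : ℤ) :
    dFourier n (dD n f) m =
      (n : ℂ) * (Complex.exp ((Real.pi : ℂ) * Complex.I * (m : ℂ) / (n : ℂ)) - 1) * dFourier n f m
      + f ((n : ℤ) - 1) * Complex.exp (-((Real.pi : ℂ) * Complex.I * (((((n : ℤ) - 1) : ℤ) : ℂ) / (n : ℂ)) * (m : ℂ)))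
      - f (-(n : ℤ)) * Complex.exp ((Real.pi : ℂ) * Complex.I * (m : ℂ) / (n : ℂ))
          * Complex.exp (-((Real.pi : ℂ) * Complex.I * (((-(n : ℤ)) : ℂ) / (n : ℂ)) * (m : ℂ))) := by
  have hn0 : (n : ℂ) ≠ 0 := Nat.cast_ne_zero.mpr (by omega)
  set A : ℂ := Complex.exp ((Real.pi : ℂ) * Complex.I * (m : ℂ) / (n : ℂ)) with hA
  set E : ℤ → ℂ := fun j => Complex.exp (-((Real.pi : ℂ) * Complex.I * ((j : ℂ) / (n : ℂ)) * (m : ℂ))) with hEdef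
  have hE : ∀ j : ℤ, E j = A * E (j + 1) := by
    intro j
    rw [hEdef, hA]
    simp only
    rw [← Complex.exp_add]
    congr 1
    push_cast
    field_simp
    ring
  have hsplit : Finset.Icc (-(n : ℤ)) ((n : ℤ) - 1)
      = insert ((n : ℤ) - 1) (Finset.Icc (-(n : ℤ)) ((n : ℤ) - 2)) := by
    ext x; simp; omega
  have hmem : ((n : ℤ) - 1) ∉ Finset.Icc (-(n : ℤ)) ((n : ℤ) - 2) := by simp; omega
  have hsplit2 : Finset.Icc (-(n : ℤ)) ((n : ℤ) - 1)
      = insert (-(n : ℤ)) (Finset.Icc (-(n : ℤ) + 1) ((n : ℤ) - 1)) := by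
    ext x; simp; omega
  have hmem2 : (-(n : ℤ)) ∉ Finset.Icc (-(n : ℤ) + 1) ((n : ℤ) - 1) := by simp
  set S := ∑ j ∈ Finset.Icc (-(n : ℤ)) ((n : ℤ) - 1), f j * E j with hS
  have hsum : ∑ j ∈ Finset.Icc (-(n : ℤ)) ((n : ℤ) - 1), dD n f j * E j
      = (n : ℂ) * A * (S - f (-(n : ℤ)) * E (-(n : ℤ)))
        - (n : ℂ) * (S - f ((n : ℤ) - 1) * E ((n : ℤ) - 1)) := by
    rw [hsplit, Finset.sum_insert hmem]
    have h0 : dD n f ((n : ℤ) - 1) = 0 := by simp [dD]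
    rw [h0, zero_mul, zero_add]
    have hc : ∀ j ∈ Finset.Icc (-(n : ℤ)) ((n : ℤ) - 2),
        dD n f j * E j = (n : ℂ) * A * (f (j + 1) * E (j + 1)) - (n : ℂ) * (f j * E j) := by
      intro j hj
      simp only [Finset.mem_Icc] at hj
      rw [dD, if_neg (by omega)]
      rw [hE j]
      ring
    rw [Finset.sum_congr rfl hc, Finset.sum_sub_distrib, ← Finset.mul_sum, ← Finset.mul_sum]
    have hre : ∑ j ∈ Finset.Icc (-(n : ℤ)) ((n : ℤ) - 2), f (j + 1) * E (j + 1)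
        = ∑ j ∈ Finset.Icc (-(n : ℤ) + 1) ((n : ℤ) - 1), f j * E j := by
      have hmap : Finset.Icc (-(n : ℤ) + 1) ((n : ℤ) - 1)
          = (Finset.Icc (-(n : ℤ)) ((n : ℤ) - 2)).map (addRightEmbedding 1) := by
        rw [Finset.map_add_right_Icc]; congr 1; ring
      rw [hmap, Finset.sum_map]
      rfl
    have hbot : ∑ j ∈ Finset.Icc (-(n : ℤ) + 1) ((n : ℤ) - 1), f j * E j
        = S - f (-(n : ℤ)) * E (-(n : ℤ)) := by
      rw [hS, hsplit2, Finset.sum_insert hmem2]; ring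
    have htop : ∑ j ∈ Finset.Icc (-(n : ℤ)) ((n : ℤ) - 2), f j * E j
        = S - f ((n : ℤ) - 1) * E ((n : ℤ) - 1) := by
      rw [hS, hsplit, Finset.sum_insert hmem]; ring
    rw [hre, hbot, htop]
  rw [dFourier, dFourier, hsum]
  have hE1 : E ((n : ℤ) - 1)
      = Complex.exp (-((Real.pi : ℂ) * Complex.I * (((((n : ℤ) - 1) : ℤ) : ℂ) / (n : ℂ)) * (m : ℂ))) := rfl
  have hE2 : E (-(n : ℤ))
      = Complex.exp (-((Real.pi : ℂ) * Complex.I * (((-(n : ℤ)) : ℂ) / (n : ℂ)) * (m : ℂ))) := by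
    rw [hEdef]; norm_num
  rw [← hE1, ← hE2, ← hS]
  field_simp
  ring

/-- Second-order relation for the discrete Fourier transform:
ĝ_n(m) = (ĝ''_n(m) + F_n(m)) / ψ_n(m)² for m ≠ 0. -/
theorem discrete_fourier_second_derivative_formula
    (n : ℕ) (hn : 1 ≤ n) (g : ℝ → ℂ)
    (gs : ℤ → ℂ) (hgs : gs = fun j : ℤ => g ((j : ℝ) / (n : ℝ)))
    (φ ψ C D C' D' F : ℤ → ℂ)
    (hφ : ∀ m : ℤ, φ m = (n : ℂ) * (Complex.exp (-((Real.pi : ℂ) * Complex.I * (m : ℂ) / (n : ℂ))) - 1))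
    (hψ : ∀ m : ℤ, ψ m = (n : ℂ) * (Complex.exp ((Real.pi : ℂ) * Complex.I * (m : ℂ) / (n : ℂ)) - 1))
    (hC : ∀ m : ℤ, C m = g (((n : ℝ) - 1) / (n : ℝ)) *
          Complex.exp (-((Real.pi : ℂ) * Complex.I * (((n : ℂ) - 1) / (n : ℂ)) * (m : ℂ)))
        - g (-1) * Complex.exp ((Real.pi : ℂ) * Complex.I * (m : ℂ)))
    (hD : ∀ m : ℤ, D m = -(1 / (n : ℂ)) * g (-1) *
          Complex.exp ((Real.pi : ℂ) * Complex.I * (m : ℂ) / (n : ℂ)) *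
          Complex.exp ((Real.pi : ℂ) * Complex.I * (m : ℂ)))
    (hC' : ∀ m : ℤ, C' m = -(dD n gs (-(n : ℤ))) * Complex.exp ((Real.pi : ℂ) * Complex.I * (m : ℂ)))
    (hD' : ∀ m : ℤ, D' m = -(1 / (n : ℂ)) * dD n gs (-(n : ℤ)) *
          Complex.exp ((Real.pi : ℂ) * Complex.I * (m : ℂ) / (n : ℂ)) *
          Complex.exp ((Real.pi : ℂ) * Complex.I * (m : ℂ)))
    (hF : ∀ m : ℤ, F m = ψ m * φ m * D m - ψ m * C m + φ m * D' m - C' m) :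
    ∀ m : ℤ, -(n : ℤ) ≤ m → m ≤ (n : ℤ) - 1 → m ≠ 0 →
      dFourier n gs m = (dFourier n (dD n (dD n gs)) m + F m) / (ψ m) ^ 2 := by
  intro m hm1 hm2 hm0
  have hn0 : (n : ℂ) ≠ 0 := Nat.cast_ne_zero.mpr (by omega)
  have hπ : (Real.pi : ℂ) ≠ 0 := by exact_mod_cast Real.pi_ne_zero
  have hnz : (1 : ℤ) ≤ (n : ℤ) := by exact_mod_cast hn
  -- ψ m ≠ 0
  have hA1 : Complex.exp ((Real.pi : ℂ) * Complex.I * (m : ℂ) / (n : ℂ)) ≠ 1 := by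
    intro h
    rw [Complex.exp_eq_one_iff] at h
    obtain ⟨k, hk⟩ := h
    have hm : (m : ℂ) = 2 * (k : ℂ) * (n : ℂ) := by
      field_simp at hk
      have h3 : (m : ℂ) * ((Real.pi : ℂ) * Complex.I)
          = (2 * (k : ℂ) * (n : ℂ)) * ((Real.pi : ℂ) * Complex.I) := by
        linear_combination ((Real.pi : ℂ) * Complex.I) * hk
      exact mul_right_cancel₀ (mul_ne_zero hπ Complex.I_ne_zero) h3
    have hmz : m = 2 * k * n := by exact_mod_cast hm
    rcases lt_trichotomy k 0 with h' | h' | h'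
    · nlinarith
    · exact hm0 (by rw [h'] at hmz; simpa using hmz)
    · nlinarith
  have hψne : ψ m ≠ 0 := by
    rw [hψ]; exact mul_ne_zero hn0 (sub_ne_zero.mpr hA1)
  -- auxiliary exp identities
  have hAB : Complex.exp (-((Real.pi : ℂ) * Complex.I * (m : ℂ) / (n : ℂ))) *
      Complex.exp ((Real.pi : ℂ) * Complex.I * (m : ℂ) / (n : ℂ)) = 1 := by
    rw [← Complex.exp_add]; simp
  have hn5 : (n : ℂ) * (1 / (n : ℂ)) = 1 := by field_simp
  have hEP : Complex.exp (-((Real.pi : ℂ) * Complex.I * (((-(n : ℤ)) : ℂ) / (n : ℂ)) * (m : ℂ)))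
      = Complex.exp ((Real.pi : ℂ) * Complex.I * (m : ℂ)) := by
    congr 1; push_cast; field_simp
  have hE1cast : Complex.exp (-((Real.pi : ℂ) * Complex.I * (((((n : ℤ) - 1) : ℤ) : ℂ) / (n : ℂ)) * (m : ℂ)))
      = Complex.exp (-((Real.pi : ℂ) * Complex.I * (((n : ℂ) - 1) / (n : ℂ)) * (m : ℂ))) := by
    norm_cast
  -- grid values
  have hv1 : gs ((n : ℤ) - 1) = g (((n : ℝ) - 1) / (n : ℝ)) := by
    rw [hgs]; norm_num
  have hv2 : gs (-(n : ℤ)) = g (-1) := by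
    have hnr : (n : ℝ) ≠ 0 := Nat.cast_ne_zero.mpr (by omega)
    rw [hgs]
    simp only
    congr 1
    push_cast
    field_simp
  have hb0 : dD n gs ((n : ℤ) - 1) = 0 := by simp [dD]
  -- first order relations
  have h1 := dD_key n hn gs m
  have h2 := dD_key n hn (dD n gs) m
  rw [← hψ m, hEP, hE1cast, hv1, hv2] at h1
  rw [← hψ m, hEP, hE1cast, hb0] at h2
  -- boundary identities
  have e1 : C m - φ m * D m = g (((n : ℝ) - 1) / (n : ℝ)) *
        Complex.exp (-((Real.pi : ℂ) * Complex.I * (((n : ℂ) - 1) / (n : ℂ)) * (m : ℂ)))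
      - g (-1) * Complex.exp ((Real.pi : ℂ) * Complex.I * (m : ℂ) / (n : ℂ))
        * Complex.exp ((Real.pi : ℂ) * Complex.I * (m : ℂ)) := by
    rw [hC m, hD m, hφ m]
    linear_combination (g (-1) * Complex.exp ((Real.pi : ℂ) * Complex.I * (m : ℂ)) *
        (Complex.exp ((Real.pi : ℂ) * Complex.I * (m : ℂ) / (n : ℂ)) *
          Complex.exp (-((Real.pi : ℂ) * Complex.I * (m : ℂ) / (n : ℂ))) -
          Complex.exp ((Real.pi : ℂ) * Complex.I * (m : ℂ) / (n : ℂ)))) * hn5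
      + (g (-1) * Complex.exp ((Real.pi : ℂ) * Complex.I * (m : ℂ))) * hAB
  have e2 : C' m - φ m * D' m = -(dD n gs (-(n : ℤ)) *
        Complex.exp ((Real.pi : ℂ) * Complex.I * (m : ℂ) / (n : ℂ))
        * Complex.exp ((Real.pi : ℂ) * Complex.I * (m : ℂ))) := by
    rw [hC' m, hD' m, hφ m]
    linear_combination (dD n gs (-(n : ℤ)) * Complex.exp ((Real.pi : ℂ) * Complex.I * (m : ℂ)) *
        (Complex.exp ((Real.pi : ℂ) * Complex.I * (m : ℂ) / (n : ℂ)) *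
          Complex.exp (-((Real.pi : ℂ) * Complex.I * (m : ℂ) / (n : ℂ))) -
          Complex.exp ((Real.pi : ℂ) * Complex.I * (m : ℂ) / (n : ℂ)))) * hn5
      + (dD n gs (-(n : ℤ)) * Complex.exp ((Real.pi : ℂ) * Complex.I * (m : ℂ))) * hAB
  rw [eq_div_iff (pow_ne_zero 2 hψne)]
  linear_combination -h2 - ψ m * h1 - hF m + ψ m * e1 + e2
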